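/- Let n ≥ 3 and let C_n be the cycle graph on ZMod n, in which i and j are adjacent exactly when j = i + 1 or j = i − 1. Then every strongly confluent partial orientation O of C_n is either empty, or equal to {(i, i+1) : i ∈ ZMod n}, or equal to {(i, i−1) : i ∈ ZMod n} (one of the two cyclic orientations). -/

import Mathlib

open SimpleGraph

variable {V : Type*}

/-- A strongly confluent partial orientation (s.c.p.o.) of a simple graph `Γ`: a set `O` of
arcs (ordered pairs of adjacent vertices) such that (i) `O` never contains both an arc and
its reverse; (ii) at most one arc of `O` originates at each vertex; (iii) if some arc of
`O` originates at `v`, then every edge incident with `v` is oriented by `O`. -/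
def IsSCPO (Γ : SimpleGraph V) (O : Set (V × V)) : Prop :=
  (∀ p ∈ O, Γ.Adj p.1 p.2) ∧
  (∀ u v : V, (u, v) ∈ O → (v, u) ∉ O) ∧
  (∀ v u u' : V, (v, u) ∈ O → (v, u') ∈ O → u = u') ∧
  (∀ v u : V, (v, u) ∈ O → ∀ w : V, Γ.Adj v w → ((v, w) ∈ O ∨ (w, v) ∈ O))

/-- The cycle graph on `ZMod n`: `i` and `j` are adjacent exactly when `j = i + 1` or
`j = i - 1` (for `n ≥ 3` the clause `i ≠ j` is automatic). -/
def cycleGraphZMod (n : ℕ) : SimpleGraph (ZMod n) where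
  Adj i j := i ≠ j ∧ (j = i + 1 ∨ j = i - 1)
  symm := by
    constructor
    intro i j h
    obtain ⟨hne, h | h⟩ := h
    · exact ⟨hne.symm, Or.inr (by rw [h]; ring)⟩
    · exact ⟨hne.symm, Or.inl (by rw [h]; ring)⟩
  loopless := by
    constructor
    intro i h
    exact h.1 rfl

/-- Lemma: for `n ≥ 3`, every strongly confluent partial orientation of the cycle graph
`C_n` is empty or one of the two cyclic orientations. -/
theorem scpo_of_cycleGraph (n : ℕ) (hn : 3 ≤ n) (O : Set (ZMod n × ZMod n))
    (hO : IsSCPO (cycleGraphZMod n) O) :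
    O = ∅ ∨ O = {p : ZMod n × ZMod n | p.2 = p.1 + 1} ∨
      O = {p : ZMod n × ZMod n | p.2 = p.1 - 1} := by
  haveI : NeZero n := ⟨by omega⟩
  haveI : Fact (1 < n) := ⟨by omega⟩
  have h2 : (2 : ZMod n) ≠ 0 := by
    intro h
    have : ((2 : ℕ) : ZMod n) = 0 := by push_cast; exact h
    rw [ZMod.natCast_eq_zero_iff] at this
    have := Nat.le_of_dvd (by norm_num) this
    omega
  have hadd : ∀ v : ZMod n, (cycleGraphZMod n).Adj v (v + 1) := by
    intro v
    exact ⟨by intro h; exact one_ne_zero (by linear_combination -h), Or.inl rfl⟩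
  have hsub : ∀ v : ZMod n, (cycleGraphZMod n).Adj v (v - 1) := by
    intro v
    exact ⟨by intro h; exact one_ne_zero (by linear_combination h), Or.inr rfl⟩
  obtain ⟨hA, hrev, huniq, htot⟩ := hO
  rcases Set.eq_empty_or_nonempty O with he | ⟨⟨v₀, u₀⟩, hv₀⟩
  · exact Or.inl he
  -- propagation lemmas
  have stepP : ∀ v : ZMod n, (v, v + 1) ∈ O → (v - 1, v) ∈ O := by
    intro v h
    rcases htot v (v + 1) h (v - 1) (hsub v) with h' | h'
    · exact absurd (huniq v (v + 1) (v - 1) h h') (by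
        intro hh; exact h2 (by linear_combination hh))
    · exact h'
  have stepM : ∀ v : ZMod n, (v, v - 1) ∈ O → (v + 1, v) ∈ O := by
    intro v h
    rcases htot v (v - 1) h (v + 1) (hadd v) with h' | h'
    · exact absurd (huniq v (v - 1) (v + 1) h h') (by
        intro hh; exact h2 (by linear_combination -hh))
    · exact h'
  have key : ∀ v : ZMod n, (∀ i : ZMod n, (v, v + 1) ∈ O → (i, i + 1) ∈ O) ∧
      (∀ i : ZMod n, (v, v - 1) ∈ O → (i, i - 1) ∈ O) := by
    intro v
    constructor
    · intro i h
      have hall : ∀ k : ℕ, (v - k, v - k + 1) ∈ O := by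
        intro k
        induction k with
        | zero => simpa using h
        | succ m ih =>
          have := stepP (v - m) ih
          have e1 : v - (↑(m + 1) : ZMod n) = v - m - 1 := by push_cast; ring
          have e2 : v - (↑(m + 1) : ZMod n) + 1 = v - m := by push_cast; ring
          rw [e2, e1]
          exact this
      have := hall (v - i).val
      rwa [show v - ((v - i).val : ZMod n) = i by
        rw [ZMod.natCast_val, ZMod.cast_id]; ring] at this
    · intro i h
      have hall : ∀ k : ℕ, (v + k, v + k - 1) ∈ O := by
        intro k
        induction k with
        | zero => simpa using h
        | succ m ih =>
          have := stepM (v + m) ih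
          have e1 : v + (↑(m + 1) : ZMod n) = v + m + 1 := by push_cast; ring
          have e2 : v + (↑(m + 1) : ZMod n) - 1 = v + m := by push_cast; ring
          rw [e2, e1]
          exact this
      have := hall (i - v).val
      rwa [show v + ((i - v).val : ZMod n) = i by
        rw [ZMod.natCast_val, ZMod.cast_id]; ring] at this
  have hadj := hA _ hv₀
  rcases hadj.2 with hu | hu
  · refine Or.inr (Or.inl ?_)
    have hallP : ∀ i : ZMod n, (i, i + 1) ∈ O := fun i =>
      (key v₀).1 i (hu ▸ hv₀)
    ext ⟨a, b⟩
    simp only [Set.mem_setOf_eq]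
    constructor
    · intro hab
      exact huniq a b (a + 1) hab (hallP a)
    · intro hab
      rw [show (a, b) = (a, a + 1) by rw [hab]]
      exact hallP a
  · refine Or.inr (Or.inr ?_)
    have hallM : ∀ i : ZMod n, (i, i - 1) ∈ O := fun i =>
      (key v₀).2 i (hu ▸ hv₀)
    ext ⟨a, b⟩
    simp only [Set.mem_setOf_eq]
    constructor
    · intro hab
      exact huniq a b (a - 1) hab (hallM a)
    · intro hab
      rw [show (a, b) = (a, a - 1) by rw [hab]]
      exact hallM a
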